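/- For every real α > 0 and every complex s with Re(s) > 0, one has ∫_0^∞ erfc(α·t)·t^{s−1} dt = α^{−s}·Γ((s+1)/2) / (√π · s), the integral converging absolutely, where Γ denotes the Gamma function. -/

import Mathlib

open MeasureTheory Filter Set

noncomputable section

/-- The complementary error function `erfc(x) = (2/√π)∫_x^∞ e^{-r²} dr`. -/
def erfc (x : ℝ) : ℝ := (2 / Real.sqrt Real.pi) * ∫ r in Set.Ioi x, Real.exp (-(r ^ 2))

namespace Stmt12Aux

lemma measurable_ofReal_cpow (w : ℂ) : Measurable fun x : ℝ => (x : ℂ) ^ w := by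
  have h : (fun x : ℝ => (x : ℂ) ^ w)
      = fun x : ℝ => if (x : ℂ) = 0 then (if w = 0 then 1 else 0)
        else Complex.exp (Complex.log (x : ℂ) * w) := by
    funext x; rw [Complex.cpow_def]
  rw [h]
  refine Measurable.ite ?_ measurable_const ?_
  · exact Complex.measurable_ofReal (measurableSet_singleton 0)
  · exact Complex.measurable_exp.comp
      ((Complex.measurable_log.comp Complex.measurable_ofReal).mul_const w)

lemma gauss_mellin {w : ℂ} (hw : 0 < w.re) :
    ∫ r in Ioi (0 : ℝ), (Real.exp (-(r ^ 2)) : ℂ) * (r : ℂ) ^ w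
      = Complex.Gamma ((w + 1) / 2) / 2 := by
  have h1 : 0 < ((w + 1) / 2).re := by
    rw [Complex.div_ofNat_re, Complex.add_re, Complex.one_re]
    positivity
  have h2 := integral_comp_rpow_Ioi
    (fun y : ℝ => (Real.exp (-y) : ℂ) * (y : ℂ) ^ ((w + 1) / 2 - 1)) (p := 2) two_ne_zero
  have key : ∀ x ∈ Ioi (0 : ℝ),
      (|(2 : ℝ)| * x ^ ((2 : ℝ) - 1)) •
        ((Real.exp (-(x ^ (2 : ℝ))) : ℂ) * ((x ^ (2 : ℝ) : ℝ) : ℂ) ^ ((w + 1) / 2 - 1))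
      = 2 * ((Real.exp (-(x ^ 2)) : ℂ) * (x : ℂ) ^ w) := by
    intro x hx
    rw [mem_Ioi] at hx
    have hx0 : (x : ℂ) ≠ 0 := Complex.ofReal_ne_zero.mpr hx.ne'
    have hr2 : x ^ (2 : ℝ) = x ^ 2 := by
      rw [← Real.rpow_natCast x 2]; norm_num
    have harg : Complex.arg (x : ℂ) = 0 := Complex.arg_ofReal_of_nonneg hx.le
    have hcp : ((x ^ 2 : ℝ) : ℂ) ^ ((w + 1) / 2 - 1) = (x : ℂ) ^ (w - 1) := by
      have : ((x ^ 2 : ℝ) : ℂ) = (x : ℂ) ^ (2 : ℕ) := by push_cast; ring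
      rw [this, ← Complex.cpow_nat_mul' (by rw [harg]; norm_num; positivity)
        (by rw [harg]; norm_num; positivity)]
      congr 1
      ring
    rw [hr2, hcp]
    have : (x : ℂ) ^ (w - 1) * (x : ℂ) ^ (1 : ℂ) = (x : ℂ) ^ w := by
      rw [← Complex.cpow_add _ _ hx0]; ring_nf
    rw [abs_of_nonneg (by norm_num : (0:ℝ) ≤ 2)]
    have hx1 : x ^ ((2:ℝ) - 1) = x := by norm_num
    rw [hx1, Complex.real_smul]
    push_cast
    rw [← this, Complex.cpow_one]
    ring
  rw [setIntegral_congr_fun measurableSet_Ioi key] at h2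
  rw [MeasureTheory.integral_const_mul] at h2
  have h3 : ∫ y in Ioi (0 : ℝ), (Real.exp (-y) : ℂ) * (y : ℂ) ^ ((w + 1) / 2 - 1)
      = Complex.Gamma ((w + 1) / 2) := by
    rw [Complex.Gamma_eq_integral h1]
    rfl
  rw [h3] at h2
  rw [← h2]
  ring

end Stmt12Aux

/-- `∫_0^∞ erfc(αt)·t^{s-1} dt = α^{-s}·Γ((s+1)/2)/(√π·s)` for `α > 0`
and `Re s > 0`, the integral converging absolutely. Here `α^{-s} = exp(-s·log α)`. -/
theorem stmt12 (α : ℝ) (hα : 0 < α) (s : ℂ) (hs : 0 < s.re) :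
    IntegrableOn (fun t : ℝ => (erfc (α * t) : ℂ) * (t : ℂ) ^ (s - 1)) (Set.Ioi 0) ∧
    (∫ t in Set.Ioi (0 : ℝ), (erfc (α * t) : ℂ) * (t : ℂ) ^ (s - 1)) =
      Complex.exp (-s * (Real.log α : ℂ)) * Complex.Gamma ((s + 1) / 2) /
        ((Real.sqrt Real.pi : ℂ) * s) := by
  have hπ : (0 : ℝ) < Real.sqrt Real.pi := Real.sqrt_pos.mpr Real.pi_pos
  have hs0 : s ≠ 0 := fun h => by simp [h] at hs
  have hσ1 : -1 < (s - 1).re := by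
    simp only [Complex.sub_re, Complex.one_re]; linarith
  have hσ1' : -1 < s.re - 1 := by linarith
  set μ := volume.restrict (Ioi (0 : ℝ)) with hμdef
  set g : ℝ × ℝ → ℂ := fun p => (Real.exp (-(p.2 ^ 2)) : ℂ) * (p.1 : ℂ) ^ (s - 1) with hgdef
  set S : Set (ℝ × ℝ) := {p : ℝ × ℝ | α * p.1 < p.2} with hSdef
  set f : ℝ × ℝ → ℂ := S.indicator g with hfdef
  have hS : MeasurableSet S := measurableSet_lt (measurable_fst.const_mul α) measurable_snd
  have hgm : Measurable g := by
    exact (Complex.measurable_ofReal.comp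
        (Real.measurable_exp.comp ((measurable_snd.pow_const 2).neg))).mul
      ((Stmt12Aux.measurable_ofReal_cpow (s - 1)).comp measurable_fst)
  have hfm : AEStronglyMeasurable f (μ.prod μ) := (hgm.indicator hS).aestronglyMeasurable
  -- sections in t for fixed r
  have h_sect : ∀ r : ℝ, (fun t => f (t, r)) =
      (Iio (r / α)).indicator (fun t : ℝ => (Real.exp (-(r ^ 2)) : ℂ) * (t : ℂ) ^ (s - 1)) := by
    intro r
    funext t
    simp only [hfdef, hSdef, hgdef, indicator, mem_setOf_eq, mem_Iio, lt_div_iff₀ hα, mul_comm]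
  have hcpow_int : ∀ b : ℝ, IntegrableOn (fun t : ℝ => (t : ℂ) ^ (s - 1)) (Ioo 0 b) := by
    intro b
    rcases le_or_gt b 0 with hb | hb
    · rw [Ioo_eq_empty (by intro h; exact absurd (h.trans_le hb) (lt_irrefl 0))]
      exact integrableOn_empty
    · exact ((intervalIntegrable_iff_integrableOn_Ioc_of_le hb.le).mp
        (intervalIntegral.intervalIntegrable_cpow' hσ1)).mono_set Ioo_subset_Ioc_self
  have hI : ∀ r : ℝ, Integrable (fun t => f (t, r)) μ := by
    intro r
    rw [h_sect r, hμdef]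
    rw [integrable_indicator_iff measurableSet_Iio]
    rw [IntegrableOn, Measure.restrict_restrict measurableSet_Iio, Set.Iio_inter_Ioi]
    exact ((hcpow_int (r / α)).const_mul _)
  have hIv : ∀ r : ℝ, 0 < r → ∫ t, f (t, r) ∂μ =
      (Real.exp (-(r ^ 2)) : ℂ) * (((r / α : ℝ) : ℂ) ^ s / s) := by
    intro r hr
    have hb : 0 < r / α := div_pos hr hα
    rw [h_sect r, hμdef, integral_indicator measurableSet_Iio,
      Measure.restrict_restrict measurableSet_Iio, Set.Iio_inter_Ioi,
      MeasureTheory.integral_const_mul]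
    congr 1
    rw [← integral_Ioc_eq_integral_Ioo, ← intervalIntegral.integral_of_le hb.le,
      integral_cpow (Or.inl hσ1)]
    have h1 : s - 1 + 1 = s := by ring
    rw [h1, Complex.ofReal_zero, Complex.zero_cpow hs0, sub_zero]
  have hIn : ∀ r : ℝ, 0 < r → (∫ t, ‖f (t, r)‖ ∂μ) =
      Real.exp (-(r ^ 2)) * ((r / α) ^ s.re / s.re) := by
    intro r hr
    have hb : 0 < r / α := div_pos hr hα
    have : (fun t => ‖f (t, r)‖) = (Iio (r / α)).indicator
        (fun t : ℝ => ‖(Real.exp (-(r ^ 2)) : ℂ) * (t : ℂ) ^ (s - 1)‖) := by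
      funext t
      rw [show f (t, r) = ((Iio (r / α)).indicator
          (fun t : ℝ => (Real.exp (-(r ^ 2)) : ℂ) * (t : ℂ) ^ (s - 1)) t) from
        congrFun (h_sect r) t, norm_indicator_eq_indicator_norm]
    rw [this, hμdef, integral_indicator measurableSet_Iio,
      Measure.restrict_restrict measurableSet_Iio, Set.Iio_inter_Ioi]
    rw [setIntegral_congr_fun measurableSet_Ioo (g := fun t : ℝ =>
      Real.exp (-(r ^ 2)) * t ^ (s.re - 1)) (fun t ht => ?_)]
    · rw [MeasureTheory.integral_const_mul]
      congr 1
      rw [← integral_Ioc_eq_integral_Ioo, ← intervalIntegral.integral_of_le hb.le,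
        integral_rpow (Or.inl hσ1')]
      rw [sub_add_cancel, Real.zero_rpow (by positivity : s.re ≠ 0), sub_zero]
    · rw [norm_mul, Complex.norm_real, Real.norm_eq_abs, abs_of_pos (Real.exp_pos _),
        Complex.norm_cpow_eq_rpow_re_of_pos ht.1, Complex.sub_re,
        Complex.one_re]
  -- integrability on the product
  have hnice : IntegrableOn
      (fun r : ℝ => Real.exp (-(r ^ 2)) * ((r / α) ^ s.re / s.re)) (Ioi 0) := by
    have base : IntegrableOn (fun x : ℝ => x ^ s.re * Real.exp (-1 * x ^ 2)) (Ioi 0) :=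
      integrableOn_rpow_mul_exp_neg_mul_sq zero_lt_one (by linarith)
    have := (base.mul_const ((α ^ s.re * s.re)⁻¹))
    refine IntegrableOn.congr_fun this (fun r hr => ?_) measurableSet_Ioi
    rw [mem_Ioi] at hr
    have h1 : α ^ s.re ≠ 0 := (Real.rpow_pos_of_pos hα _).ne'
    have h2 : s.re ≠ 0 := ne_of_gt hs
    rw [Real.div_rpow hr.le hα.le, show (-1 : ℝ) * r ^ 2 = -(r ^ 2) by ring]
    field_simp
  have hf : Integrable f (μ.prod μ) := by
    refine (integrable_prod_iff' hfm).2 ⟨?_, ?_⟩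
    · filter_upwards [ae_restrict_mem measurableSet_Ioi] with r _
      exact hI r
    · refine IntegrableOn.congr_fun hnice ?_ measurableSet_Ioi
      intro r hr
      exact (hIn r hr).symm
  -- marginal in r
  have hmarg : ∀ t : ℝ, 0 < t → ∫ r, f (t, r) ∂μ =
      ((∫ r in Ioi (α * t), Real.exp (-(r ^ 2))) : ℝ) * (t : ℂ) ^ (s - 1) := by
    intro t ht
    have h1 : (fun r => f (t, r)) = (Ioi (α * t)).indicator
        (fun r : ℝ => (Real.exp (-(r ^ 2)) : ℂ) * (t : ℂ) ^ (s - 1)) := by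
      funext r
      simp only [hfdef, hSdef, hgdef, indicator, mem_setOf_eq, mem_Ioi]
    rw [h1, hμdef, integral_indicator measurableSet_Ioi,
      Measure.restrict_restrict measurableSet_Ioi,
      inter_eq_self_of_subset_left (Ioi_subset_Ioi (by positivity)),
      MeasureTheory.integral_mul_const]
    congr 1
    exact integral_ofReal
  have hkey : ∀ t : ℝ, 0 < t → (erfc (α * t) : ℂ) * (t : ℂ) ^ (s - 1) =
      ((2 / Real.sqrt Real.pi : ℝ) : ℂ) * ∫ r, f (t, r) ∂μ := by
    intro t ht
    rw [hmarg t ht, erfc]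
    push_cast
    ring
  constructor
  · have hmargInt : Integrable (fun t => ∫ r, f (t, r) ∂μ) μ := hf.integral_prod_left
    refine (hmargInt.const_mul ((2 / Real.sqrt Real.pi : ℝ) : ℂ)).congr ?_
    filter_upwards [ae_restrict_mem measurableSet_Ioi] with t ht
    exact (hkey t ht).symm
  · rw [setIntegral_congr_fun measurableSet_Ioi (fun t ht => hkey t ht),
      MeasureTheory.integral_const_mul]
    have hswap : ∫ t, (∫ r, f (t, r) ∂μ) ∂μ = ∫ r, (∫ t, f (t, r) ∂μ) ∂μ :=
      integral_integral_swap hf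
    rw [hswap]
    have h2 : ∫ r, (∫ t, f (t, r) ∂μ) ∂μ =
        ∫ r in Ioi (0 : ℝ), (((α⁻¹ : ℝ) : ℂ) ^ s / s) *
          ((Real.exp (-(r ^ 2)) : ℂ) * (r : ℂ) ^ s) := by
      rw [hμdef]
      refine setIntegral_congr_fun measurableSet_Ioi (fun r hr => ?_)
      rw [mem_Ioi] at hr
      rw [hIv r hr]
      have : ((r / α : ℝ) : ℂ) ^ s = (r : ℂ) ^ s * ((α⁻¹ : ℝ) : ℂ) ^ s := by
        rw [div_eq_mul_inv, Complex.ofReal_mul,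
          Complex.mul_cpow_ofReal_nonneg hr.le (inv_nonneg.2 hα.le)]
      rw [this]
      ring
    rw [h2, MeasureTheory.integral_const_mul, Stmt12Aux.gauss_mellin hs]
    have hA : ((α⁻¹ : ℝ) : ℂ) ^ s = Complex.exp (-s * (Real.log α : ℂ)) := by
      rw [Complex.cpow_def_of_ne_zero (Complex.ofReal_ne_zero.mpr (inv_ne_zero hα.ne'))]
      rw [← Complex.ofReal_log (inv_nonneg.2 hα.le), Real.log_inv]
      push_cast
      ring_nf
    rw [hA]
    have hπ0 : (Real.sqrt Real.pi : ℂ) ≠ 0 := Complex.ofReal_ne_zero.mpr hπ.ne'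
    push_cast
    field_simp

end
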